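/- For every q ∈ C with 0 < |q| < 1 the Jacobi derivative formula holds: 2·Σ_{n=0}^∞ (−1)^n (2n+1) q^{(n+1/2)²} = θ_2(0,q)·θ_3(0,q)·θ_4(0,q); that is, θ_1'(0,q) = θ_2(0,q)θ_3(0,q)θ_4(0,q), where θ_1' is the derivative of θ_1(z,q) with respect to z. -/

import Mathlib

/-- The theta constant `θ₂(0,q) = Σ_{n∈ℤ} q^{(n+1/2)²}`, where half-integer powers of `q`
are taken with the principal branch of the complex logarithm. -/
noncomputable def thetaTwo (q : ℂ) : ℂ := ∑' n : ℤ, q ^ (((n : ℂ) + 1 / 2) ^ 2)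

/-- The theta constant `θ₃(0,q) = Σ_{n∈ℤ} q^{n²}`. -/
noncomputable def thetaThree (q : ℂ) : ℂ := ∑' n : ℤ, q ^ (n ^ 2)

/-- The theta constant `θ₄(0,q) = Σ_{n∈ℤ} (-1)^n q^{n²}`. -/
noncomputable def thetaFour (q : ℂ) : ℂ := ∑' n : ℤ, (-1 : ℂ) ^ n * q ^ (n ^ 2)

open Complex Filter

noncomputable section

namespace JDF

/-! ### Generic sum-type splitting for `tsum` -/

lemma tsum_sumType {α β : Type*} {f : α ⊕ β → ℂ}
    (h₁ : Summable fun a => f (Sum.inl a)) (h₂ : Summable fun b => f (Sum.inr b)) :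
    ∑' x, f x = (∑' a, f (Sum.inl a)) + ∑' b, f (Sum.inr b) := by
  have e1 : ∀ x : α ⊕ β, f x = Sum.elim (fun a => f (Sum.inl a)) (fun _ => (0:ℂ)) x
      + Sum.elim (fun _ => (0:ℂ)) (fun b => f (Sum.inr b)) x := by
    rintro (a | b) <;> simp
  have hs1 : Summable (Sum.elim (fun a => f (Sum.inl a)) (fun _ : β => (0:ℂ))) := by
    refine (Function.Injective.summable_iff Sum.inl_injective ?_).mp h₁
    intro x hx
    rcases x with a | b
    · exact absurd (Set.mem_range_self a) hx
    · rfl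
  have hs2 : Summable (Sum.elim (fun _ : α => (0:ℂ)) (fun b => f (Sum.inr b))) := by
    refine (Function.Injective.summable_iff Sum.inr_injective ?_).mp h₂
    intro x hx
    rcases x with a | b
    · rfl
    · exact absurd (Set.mem_range_self b) hx
  calc ∑' x, f x = ∑' x, (Sum.elim (fun a => f (Sum.inl a)) (fun _ : β => (0:ℂ)) x
      + Sum.elim (fun _ : α => (0:ℂ)) (fun b => f (Sum.inr b)) x) := tsum_congr e1
    _ = (∑' x, Sum.elim (fun a => f (Sum.inl a)) (fun _ : β => (0:ℂ)) x)
        + ∑' x, Sum.elim (fun _ : α => (0:ℂ)) (fun b => f (Sum.inr b)) x := Summable.tsum_add hs1 hs2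
    _ = (∑' a, f (Sum.inl a)) + ∑' b, f (Sum.inr b) := by
        congr 1
        · rw [← Function.Injective.tsum_eq (Sum.inl_injective)
            (f := Sum.elim (fun a => f (Sum.inl a)) (fun _ : β => (0:ℂ))) (by
              intro x hx
              rcases x with a | b
              · exact ⟨a, rfl⟩
              · simp [Function.mem_support] at hx)]
          exact tsum_congr fun c => rfl
        · rw [← Function.Injective.tsum_eq (Sum.inr_injective)
            (f := Sum.elim (fun _ : α => (0:ℂ)) (fun b => f (Sum.inr b))) (by
              intro x hx
              rcases x with a | b
              · simp [Function.mem_support] at hx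
              · exact ⟨b, rfl⟩)]
          exact tsum_congr fun c => rfl

/-! ### Index equivalences -/

/-- `ℕ ⊕ ℕ ≃ ℤ`, `inl n ↦ n`, `inr n ↦ -1-n`. -/
def e₁ : ℕ ⊕ ℕ ≃ ℤ where
  toFun := Sum.elim (fun n => (n : ℤ)) (fun n => -1 - (n : ℤ))
  invFun z := if 0 ≤ z then Sum.inl z.toNat else Sum.inr (-1 - z).toNat
  left_inv := by
    rintro (n | n) <;> dsimp only [Sum.elim_inl, Sum.elim_inr]
    · rw [if_pos (by omega)]
      simp
    · rw [if_neg (by omega)]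
      congr 1
      omega
  right_inv := by
    intro z
    dsimp only
    split_ifs with h <;> dsimp only [Sum.elim_inl, Sum.elim_inr] <;> omega

/-- parity splitting of `ℤ × ℤ`. -/
def pe : (ℤ × ℤ) ⊕ (ℤ × ℤ) ≃ ℤ × ℤ where
  toFun s := Sum.elim (fun p : ℤ × ℤ => (p.1 + p.2, p.1 - p.2))
    (fun p : ℤ × ℤ => (p.1 + p.2 + 1, p.1 - p.2)) s
  invFun p := if (p.1 + p.2) % 2 = 0 then Sum.inl ((p.1 + p.2) / 2, (p.1 - p.2) / 2)
    else Sum.inr ((p.1 + p.2 - 1) / 2, (p.1 - p.2 - 1) / 2)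
  left_inv := by
    rintro (⟨a, b⟩ | ⟨a, b⟩) <;>
      dsimp only [Sum.elim_inl, Sum.elim_inr] <;> split_ifs with h <;>
      first
        | (exfalso; omega)
        | (simp only [Prod.mk.injEq, Sum.inl.injEq, Sum.inr.injEq]; omega)
  right_inv := by
    rintro ⟨m, n⟩
    dsimp only
    split_ifs with h <;> dsimp only [Sum.elim_inl, Sum.elim_inr] <;>
      simp only [Prod.mk.injEq] <;> constructor <;> omega

/-! ### zpow and sign helpers -/

lemma sq_zpow {x : ℂ} (hx : x ≠ 0) (t : ℤ) : (x ^ 2) ^ t = x ^ (2 * t) := by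
  rw [sq, mul_zpow, ← zpow_add₀ hx, two_mul]

lemma neg_one_zpow_two_mul (c : ℤ) : (-1 : ℂ) ^ (2 * c) = 1 := by
  rw [← sq_zpow (by norm_num : (-1:ℂ) ≠ 0)]
  norm_num

lemma neg_one_zpow_add (a b : ℤ) : (-1 : ℂ) ^ (a + b) = (-1) ^ a * (-1) ^ b :=
  zpow_add₀ (by norm_num) a b

lemma neg_one_zpow_sub (a b : ℤ) : (-1 : ℂ) ^ (a - b) = (-1) ^ a * (-1) ^ b := by
  have : a - b = (a + b) + 2 * (-b) := by ring
  rw [this, neg_one_zpow_add, neg_one_zpow_two_mul, mul_one, neg_one_zpow_add]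

lemma zpow_collect {x : ℂ} (hx : x ≠ 0) (u v s t : ℤ) (h : u + v = 2 * s + 2 * t) :
    x ^ u * x ^ v = (x ^ 2) ^ s * (x ^ 2) ^ t := by
  rw [sq_zpow hx, sq_zpow hx, ← zpow_add₀ hx, ← zpow_add₀ hx, h]

lemma zpow_collect1 {x : ℂ} (hx : x ≠ 0) (u v s t : ℤ) (h : u + v = 2 * s + 2 * t + 1) :
    x ^ u * x ^ v = (x ^ 2) ^ s * (x ^ 2) ^ t * x := by
  rw [sq_zpow hx, sq_zpow hx, ← zpow_add₀ hx, ← zpow_add₀ hx, h, zpow_add₀ hx, zpow_one]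

/-! ### Summability -/

lemma summable_aux_real {r : ℝ} (h0 : 0 ≤ r) (h1 : r < 1) :
    Summable fun k : ℕ => (2 * (k : ℝ) + 3) * r ^ (k - 1) := by
  rw [← summable_nat_add_iff 1]
  have hgeom : Summable fun k : ℕ => r ^ k := summable_geometric_of_lt_one h0 h1
  have hpoly : Summable fun k : ℕ => (k : ℝ) * r ^ k := by
    simpa using summable_pow_mul_geometric_of_norm_lt_one 1
      (r := r) (by rwa [Real.norm_eq_abs, _root_.abs_of_nonneg h0])
  refine ((hpoly.mul_left 2).add (hgeom.mul_left 5)).congr fun k => ?_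
  simp only [Nat.add_sub_cancel]
  push_cast
  ring

lemma summable_norm_int {x : ℂ} (hx : ‖x‖ < 1) {c : ℤ → ℂ} {e : ℤ → ℤ}
    (hc : ∀ n, ‖c n‖ ≤ 2 * |(n : ℝ)| + 3) (he0 : ∀ n, 0 ≤ e n) (he : ∀ n, |n| - 1 ≤ e n) :
    Summable fun n : ℤ => ‖c n * x ^ e n‖ := by
  have key : ∀ n : ℤ, ‖c n * x ^ e n‖ ≤ (2 * |(n : ℝ)| + 3) * ‖x‖ ^ (n.natAbs - 1) := by
    intro n
    rw [norm_mul, norm_zpow]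
    have he' : ‖x‖ ^ e n = ‖x‖ ^ (e n).toNat := by
      rw [← Int.toNat_of_nonneg (he0 n), zpow_natCast, Int.toNat_of_nonneg (he0 n)]
    rw [he']
    have hle : ‖x‖ ^ (e n).toNat ≤ ‖x‖ ^ (n.natAbs - 1) := by
      apply pow_le_pow_of_le_one (norm_nonneg x) hx.le
      have := he n
      rw [Int.abs_eq_natAbs] at this
      omega
    exact mul_le_mul (hc n) hle (by positivity) (by positivity)
  have hbound : Summable fun n : ℤ => (2 * |(n : ℝ)| + 3) * ‖x‖ ^ (n.natAbs - 1) := by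
    apply Summable.of_nat_of_neg
    · refine (summable_aux_real (norm_nonneg x) hx).congr fun k => ?_
      simp
    · refine (summable_aux_real (norm_nonneg x) hx).congr fun k => ?_
      simp
  exact Summable.of_nonneg_of_le (fun n => norm_nonneg _) key hbound

/-! ### Cauchy product with parity splitting -/

lemma conv_split (f g : ℤ → ℂ) (hf : Summable fun n => ‖f n‖) (hg : Summable fun n => ‖g n‖) :
    (∑' m, f m) * (∑' n, g n)
      = (∑' p : ℤ × ℤ, f (p.1 + p.2) * g (p.1 - p.2))
        + ∑' p : ℤ × ℤ, f (p.1 + p.2 + 1) * g (p.1 - p.2) := by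
  rw [tsum_mul_tsum_of_summable_norm hf hg]
  have hs : Summable fun p : ℤ × ℤ => f p.1 * g p.2 := (hf.mul_norm hg).of_norm
  have h2 : Summable ((fun p : ℤ × ℤ => f p.1 * g p.2) ∘ pe) := (pe.summable_iff).mpr hs
  rw [← pe.tsum_eq (fun p : ℤ × ℤ => f p.1 * g p.2)]
  rw [tsum_sumType (f := fun c : (ℤ × ℤ) ⊕ (ℤ × ℤ) => f (pe c).1 * g (pe c).2)
    (h2.comp_injective Sum.inl_injective) (h2.comp_injective Sum.inr_injective)]
  congr 1 <;> exact tsum_congr fun p => rfl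

/-! ### Vanishing sums -/

/-- `∑_{n ∈ ℤ} (-1)^n y^(n²+n) = 0`. -/
lemma neg_one_zpow_neg_one_sub (n : ℤ) : (-1 : ℂ) ^ (-1 - n) = -(-1 : ℂ) ^ n := by
  have h : (-1 : ℤ) - n = n + 2 * (-1 - n) + 1 := by ring
  rw [h, neg_one_zpow_add, neg_one_zpow_add, neg_one_zpow_two_mul, zpow_one]
  ring

lemma Z_zero (y : ℂ) : (∑' n : ℤ, (-1 : ℂ) ^ n * y ^ (n ^ 2 + n)) = 0 := by
  have key : ∀ n : ℤ, (-1 : ℂ) ^ ((-1 : ℤ) - n) * y ^ (((-1 : ℤ) - n) ^ 2 + ((-1 : ℤ) - n))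
      = -((-1 : ℂ) ^ n * y ^ (n ^ 2 + n)) := by
    intro n
    have hexp : ((-1 : ℤ) - n) ^ 2 + ((-1 : ℤ) - n) = n ^ 2 + n := by ring
    rw [neg_one_zpow_neg_one_sub, hexp]
    ring
  have h : (∑' n : ℤ, (-1 : ℂ) ^ n * y ^ (n ^ 2 + n))
      = ∑' n : ℤ, -((-1 : ℂ) ^ n * y ^ (n ^ 2 + n)) := by
    rw [← (Equiv.subLeft (-1 : ℤ)).tsum_eq (fun n : ℤ => (-1 : ℂ) ^ n * y ^ (n ^ 2 + n))]
    exact tsum_congr fun n => key n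
  rw [tsum_neg] at h
  linear_combination (1/2 : ℂ) * h

/-! ### Summability wrappers (argument `y`, `‖y‖ < 1`) -/

section wrappers

variable {y : ℂ} (hy : ‖y‖ < 1)

lemma he0_eps : ∀ n : ℤ, (0:ℤ) ≤ n ^ 2 + n := by
  intro n
  rcases le_or_gt 0 n with h | h
  · positivity
  · nlinarith [mul_nonneg (by omega : (0:ℤ) ≤ -n) (by omega : (0:ℤ) ≤ -(n+1) + 1)]
lemma he_eps : ∀ n : ℤ, |n| - 1 ≤ n ^ 2 + n := by
  intro n
  rcases le_or_gt 0 n with h | h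
  · rw [abs_of_nonneg h]; nlinarith
  · rw [abs_of_neg h]; nlinarith [sq_nonneg (n + 1)]
lemma he0_sq : ∀ n : ℤ, (0:ℤ) ≤ n ^ 2 := fun n => sq_nonneg n
lemma he_sq : ∀ n : ℤ, |n| - 1 ≤ n ^ 2 := by
  intro n
  rcases le_or_gt 0 n with h | h
  · rw [abs_of_nonneg h]; nlinarith
  · rw [abs_of_neg h]; nlinarith [sq_nonneg (n + 1)]
lemma he0_sq1 : ∀ n : ℤ, (0:ℤ) ≤ (n + 1) ^ 2 := fun n => sq_nonneg _
lemma he_sq1 : ∀ n : ℤ, |n| - 1 ≤ (n + 1) ^ 2 := by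
  intro n
  rcases le_or_gt 0 n with h | h
  · rw [abs_of_nonneg h]; nlinarith
  · rcases lt_trichotomy n (-1) with h2 | h2 | h2
    · rw [abs_of_neg h]
      nlinarith [mul_nonneg (by omega : (0:ℤ) ≤ -(n+1)) (by omega : (0:ℤ) ≤ -(n+2))]
    · subst h2; norm_num
    · omega

lemma norm_neg_one_zpow (n : ℤ) : ‖(-1 : ℂ) ^ n‖ = 1 := by
  rw [norm_zpow]
  simp

include hy

lemma sW1 : Summable fun n : ℤ => ‖((-1 : ℂ) ^ n * (2 * (n:ℂ) + 1)) * y ^ (n ^ 2 + n)‖ := by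
  refine summable_norm_int hy (fun n => ?_) he0_eps he_eps
  rw [norm_mul, norm_neg_one_zpow, one_mul]
  have : (2 * (n:ℂ) + 1) = ((2 * (n:ℝ) + 1 : ℝ) : ℂ) := by push_cast; ring
  rw [this, Complex.norm_real, Real.norm_eq_abs]
  rcases abs_cases ((n:ℝ)) with ⟨h1, _⟩ | ⟨h1, _⟩ <;> rcases abs_cases (2 * (n:ℝ) + 1) with ⟨h2, _⟩ | ⟨h2, _⟩ <;> linarith

lemma sW2 : Summable fun n : ℤ => ‖y ^ (n ^ 2 + n)‖ := by
  have := summable_norm_int hy (c := fun _ => (1:ℂ)) (e := fun n => n ^ 2 + n)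
    (fun n => by simp only [norm_one]; linarith [abs_nonneg ((n:ℝ))]) he0_eps he_eps
  simpa using this

lemma sW3 : Summable fun n : ℤ => ‖y ^ (n ^ 2)‖ := by
  have := summable_norm_int hy (c := fun _ => (1:ℂ)) (e := fun n => n ^ 2)
    (fun n => by simp only [norm_one]; linarith [abs_nonneg ((n:ℝ))]) he0_sq he_sq
  simpa using this

lemma sW4 : Summable fun n : ℤ => ‖(-1 : ℂ) ^ n * y ^ (n ^ 2)‖ := by
  refine summable_norm_int hy (fun n => ?_) he0_sq he_sq
  rw [norm_neg_one_zpow]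
  linarith [abs_nonneg ((n:ℝ))]

lemma sW5 : Summable fun n : ℤ => ‖(-1 : ℂ) ^ n * y ^ (n ^ 2 + n)‖ := by
  refine summable_norm_int hy (fun n => ?_) he0_eps he_eps
  rw [norm_neg_one_zpow]
  linarith [abs_nonneg ((n:ℝ))]

lemma sW6 : Summable fun n : ℤ => ‖((-1 : ℂ) ^ n * (2 * (n:ℂ))) * y ^ (n ^ 2)‖ := by
  refine summable_norm_int hy (fun n => ?_) he0_sq he_sq
  rw [norm_mul, norm_neg_one_zpow, one_mul]
  have : (2 * (n:ℂ)) = ((2 * (n:ℝ) : ℝ) : ℂ) := by push_cast; ring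
  rw [this, Complex.norm_real, Real.norm_eq_abs, abs_mul,
    _root_.abs_of_nonneg (by norm_num : (0:ℝ) ≤ 2)]
  linarith [abs_nonneg ((n:ℝ))]

lemma sW7 : Summable fun n : ℤ => ‖(-1 : ℂ) ^ (n + 1) * y ^ ((n + 1) ^ 2)‖ := by
  refine summable_norm_int hy (fun n => ?_) he0_sq1 he_sq1
  rw [norm_neg_one_zpow]
  linarith [abs_nonneg ((n:ℝ))]

lemma sW9 : Summable fun n : ℤ => ‖((-1 : ℂ) ^ (n + 1) * (2 * (n:ℂ) + 2)) * y ^ ((n + 1) ^ 2)‖ := by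
  refine summable_norm_int hy (fun n => ?_) he0_sq1 he_sq1
  rw [norm_mul, norm_neg_one_zpow, one_mul]
  have : (2 * (n:ℂ) + 2) = ((2 * (n:ℝ) + 2 : ℝ) : ℂ) := by push_cast; ring
  rw [this, Complex.norm_real, Real.norm_eq_abs]
  rcases abs_cases ((n:ℝ)) with ⟨h1, _⟩ | ⟨h1, _⟩ <;> rcases abs_cases (2 * (n:ℝ) + 2) with ⟨h2, _⟩ | ⟨h2, _⟩ <;> linarith

end wrappers

/-! ### The three quadratic identities -/

section identities

variable {x : ℂ} (hx : ‖x‖ < 1) (hx0 : x ≠ 0)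

lemma norm_sq_lt (hx : ‖x‖ < 1) : ‖x ^ 2‖ < 1 := by
  rw [norm_pow]
  have h0 := norm_nonneg x
  nlinarith

lemma sq_ne (hx0 : x ≠ 0) : x ^ 2 ≠ 0 := pow_ne_zero 2 hx0

include hx hx0

/-- `B(x)² = 2 B(x²) C(x²)`. -/
lemma idB :
    (∑' n : ℤ, x ^ (n ^ 2 + n)) * (∑' n : ℤ, x ^ (n ^ 2 + n))
      = 2 * ((∑' n : ℤ, (x ^ 2) ^ (n ^ 2 + n)) * (∑' n : ℤ, (x ^ 2) ^ (n ^ 2))) := by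
  have hy : ‖x ^ 2‖ < 1 := norm_sq_lt hx
  rw [conv_split _ _ (sW2 hx) (sW2 hx)]
  have sW7' : Summable fun n : ℤ => ‖(x ^ 2) ^ ((n + 1) ^ 2)‖ := by
    refine (sW7 hy).congr fun n => ?_
    rw [norm_mul, norm_neg_one_zpow, one_mul]
  have p1 : (∑' p : ℤ × ℤ, x ^ ((p.1 + p.2) ^ 2 + (p.1 + p.2)) * x ^ ((p.1 - p.2) ^ 2 + (p.1 - p.2)))
      = (∑' n : ℤ, (x ^ 2) ^ (n ^ 2 + n)) * (∑' n : ℤ, (x ^ 2) ^ (n ^ 2)) :=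
    calc (∑' p : ℤ × ℤ, x ^ ((p.1 + p.2) ^ 2 + (p.1 + p.2)) * x ^ ((p.1 - p.2) ^ 2 + (p.1 - p.2)))
        = ∑' p : ℤ × ℤ, (x ^ 2) ^ (p.1 ^ 2 + p.1) * (x ^ 2) ^ (p.2 ^ 2) :=
          tsum_congr fun p => zpow_collect hx0 _ _ _ _ (by ring)
      _ = (∑' n : ℤ, (x ^ 2) ^ (n ^ 2 + n)) * (∑' n : ℤ, (x ^ 2) ^ (n ^ 2)) :=
          (tsum_mul_tsum_of_summable_norm (sW2 hy) (sW3 hy)).symm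
  have p2 : (∑' p : ℤ × ℤ, x ^ ((p.1 + p.2 + 1) ^ 2 + (p.1 + p.2 + 1)) * x ^ ((p.1 - p.2) ^ 2 + (p.1 - p.2)))
      = (∑' n : ℤ, (x ^ 2) ^ ((n + 1) ^ 2)) * (∑' n : ℤ, (x ^ 2) ^ (n ^ 2 + n)) :=
    calc (∑' p : ℤ × ℤ, x ^ ((p.1 + p.2 + 1) ^ 2 + (p.1 + p.2 + 1)) * x ^ ((p.1 - p.2) ^ 2 + (p.1 - p.2)))
        = ∑' p : ℤ × ℤ, (x ^ 2) ^ ((p.1 + 1) ^ 2) * (x ^ 2) ^ (p.2 ^ 2 + p.2) :=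
          tsum_congr fun p => zpow_collect hx0 _ _ _ _ (by ring)
      _ = (∑' n : ℤ, (x ^ 2) ^ ((n + 1) ^ 2)) * (∑' n : ℤ, (x ^ 2) ^ (n ^ 2 + n)) :=
          (tsum_mul_tsum_of_summable_norm sW7' (sW2 hy)).symm
  have p3 : (∑' n : ℤ, (x ^ 2) ^ ((n + 1) ^ 2)) = ∑' n : ℤ, (x ^ 2) ^ (n ^ 2) :=
    (Equiv.addRight (1:ℤ)).tsum_eq (fun n : ℤ => (x ^ 2) ^ (n ^ 2))
  rw [p1, p2, p3]
  ring

/-- `C(x) D(x) = D(x²)²`. -/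
lemma idCD :
    (∑' n : ℤ, x ^ (n ^ 2)) * (∑' n : ℤ, (-1 : ℂ) ^ n * x ^ (n ^ 2))
      = (∑' n : ℤ, (-1 : ℂ) ^ n * (x ^ 2) ^ (n ^ 2))
        * (∑' n : ℤ, (-1 : ℂ) ^ n * (x ^ 2) ^ (n ^ 2)) := by
  have hy : ‖x ^ 2‖ < 1 := norm_sq_lt hx
  rw [conv_split _ _ (sW3 hx) (sW4 hx)]
  have p1 : (∑' p : ℤ × ℤ, x ^ ((p.1 + p.2) ^ 2) * ((-1 : ℂ) ^ (p.1 - p.2) * x ^ ((p.1 - p.2) ^ 2)))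
      = (∑' n : ℤ, (-1 : ℂ) ^ n * (x ^ 2) ^ (n ^ 2))
        * (∑' n : ℤ, (-1 : ℂ) ^ n * (x ^ 2) ^ (n ^ 2)) :=
    calc (∑' p : ℤ × ℤ, x ^ ((p.1 + p.2) ^ 2) * ((-1 : ℂ) ^ (p.1 - p.2) * x ^ ((p.1 - p.2) ^ 2)))
        = ∑' p : ℤ × ℤ, ((-1 : ℂ) ^ p.1 * (x ^ 2) ^ (p.1 ^ 2)) * ((-1 : ℂ) ^ p.2 * (x ^ 2) ^ (p.2 ^ 2)) := by
          refine tsum_congr fun p => ?_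
          obtain ⟨a, b⟩ := p
          dsimp only
          have h2 : x ^ ((a + b) ^ 2) * x ^ ((a - b) ^ 2) = (x ^ 2) ^ (a ^ 2) * (x ^ 2) ^ (b ^ 2) :=
            zpow_collect hx0 _ _ _ _ (by ring)
          have h1 : (-1 : ℂ) ^ (a - b) = (-1) ^ a * (-1) ^ b := neg_one_zpow_sub a b
          linear_combination ((-1 : ℂ) ^ (a - b)) * h2
            + ((x ^ 2) ^ (a ^ 2) * (x ^ 2) ^ (b ^ 2)) * h1
      _ = _ := (tsum_mul_tsum_of_summable_norm (sW4 hy) (sW4 hy)).symm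
  have p2 : (∑' p : ℤ × ℤ, x ^ ((p.1 + p.2 + 1) ^ 2) * ((-1 : ℂ) ^ (p.1 - p.2) * x ^ ((p.1 - p.2) ^ 2)))
      = 0 :=
    calc (∑' p : ℤ × ℤ, x ^ ((p.1 + p.2 + 1) ^ 2) * ((-1 : ℂ) ^ (p.1 - p.2) * x ^ ((p.1 - p.2) ^ 2)))
        = ∑' p : ℤ × ℤ, (((-1 : ℂ) ^ p.1 * (x ^ 2) ^ (p.1 ^ 2 + p.1))
            * ((-1 : ℂ) ^ p.2 * (x ^ 2) ^ (p.2 ^ 2 + p.2))) * x := by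
          refine tsum_congr fun p => ?_
          obtain ⟨a, b⟩ := p
          dsimp only
          have h2 : x ^ ((a + b + 1) ^ 2) * x ^ ((a - b) ^ 2)
              = (x ^ 2) ^ (a ^ 2 + a) * (x ^ 2) ^ (b ^ 2 + b) * x :=
            zpow_collect1 hx0 _ _ _ _ (by ring)
          have h1 : (-1 : ℂ) ^ (a - b) = (-1) ^ a * (-1) ^ b := neg_one_zpow_sub a b
          linear_combination ((-1 : ℂ) ^ (a - b)) * h2
            + ((x ^ 2) ^ (a ^ 2 + a) * (x ^ 2) ^ (b ^ 2 + b) * x) * h1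
      _ = (∑' p : ℤ × ℤ, ((-1 : ℂ) ^ p.1 * (x ^ 2) ^ (p.1 ^ 2 + p.1))
            * ((-1 : ℂ) ^ p.2 * (x ^ 2) ^ (p.2 ^ 2 + p.2))) * x := tsum_mul_right
      _ = ((∑' n : ℤ, (-1 : ℂ) ^ n * (x ^ 2) ^ (n ^ 2 + n))
            * (∑' n : ℤ, (-1 : ℂ) ^ n * (x ^ 2) ^ (n ^ 2 + n))) * x := by
          rw [tsum_mul_tsum_of_summable_norm (sW5 hy) (sW5 hy)]
      _ = 0 := by rw [Z_zero]; ring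
  rw [p1, p2, add_zero]

/-- `A(x) B(x) = 2 A(x²) D(x²)`. -/
lemma idAB :
    (∑' n : ℤ, ((-1 : ℂ) ^ n * (2 * (n : ℂ) + 1)) * x ^ (n ^ 2 + n)) * (∑' n : ℤ, x ^ (n ^ 2 + n))
      = 2 * ((∑' n : ℤ, ((-1 : ℂ) ^ n * (2 * (n : ℂ) + 1)) * (x ^ 2) ^ (n ^ 2 + n))
          * (∑' n : ℤ, (-1 : ℂ) ^ n * (x ^ 2) ^ (n ^ 2))) := by
  have hy : ‖x ^ 2‖ < 1 := norm_sq_lt hx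
  rw [conv_split _ _ (sW1 hx) (sW2 hx)]
  have p1 : (∑' p : ℤ × ℤ, ((-1 : ℂ) ^ (p.1 + p.2) * (2 * ((p.1 + p.2 : ℤ) : ℂ) + 1))
        * x ^ ((p.1 + p.2) ^ 2 + (p.1 + p.2)) * x ^ ((p.1 - p.2) ^ 2 + (p.1 - p.2)))
      = (∑' n : ℤ, ((-1 : ℂ) ^ n * (2 * (n : ℂ) + 1)) * (x ^ 2) ^ (n ^ 2 + n))
          * (∑' n : ℤ, (-1 : ℂ) ^ n * (x ^ 2) ^ (n ^ 2)) := by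
    have key : ∀ p : ℤ × ℤ, ((-1 : ℂ) ^ (p.1 + p.2) * (2 * ((p.1 + p.2 : ℤ) : ℂ) + 1))
          * x ^ ((p.1 + p.2) ^ 2 + (p.1 + p.2)) * x ^ ((p.1 - p.2) ^ 2 + (p.1 - p.2))
        = (((-1 : ℂ) ^ p.1 * (2 * (p.1 : ℂ) + 1)) * (x ^ 2) ^ (p.1 ^ 2 + p.1))
            * ((-1 : ℂ) ^ p.2 * (x ^ 2) ^ (p.2 ^ 2))
          + ((-1 : ℂ) ^ p.1 * (x ^ 2) ^ (p.1 ^ 2 + p.1))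
            * (((-1 : ℂ) ^ p.2 * (2 * (p.2 : ℂ))) * (x ^ 2) ^ (p.2 ^ 2)) := by
      intro p
      obtain ⟨a, b⟩ := p
      dsimp only
      have h2 : x ^ ((a + b) ^ 2 + (a + b)) * x ^ ((a - b) ^ 2 + (a - b))
          = (x ^ 2) ^ (a ^ 2 + a) * (x ^ 2) ^ (b ^ 2) := zpow_collect hx0 _ _ _ _ (by ring)
      have h1 : (-1 : ℂ) ^ (a + b) = (-1) ^ a * (-1) ^ b := neg_one_zpow_add a b
      push_cast
      linear_combination ((2 * (a : ℂ) + 2 * b + 1) * (-1 : ℂ) ^ (a + b)) * h2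
        + ((2 * (a : ℂ) + 2 * b + 1) * ((x ^ 2) ^ (a ^ 2 + a) * (x ^ 2) ^ (b ^ 2))) * h1
    rw [tsum_congr key]
    rw [Summable.tsum_add (((sW1 hy).mul_norm (sW4 hy)).of_norm) (((sW5 hy).mul_norm (sW6 hy)).of_norm)]
    rw [← tsum_mul_tsum_of_summable_norm (sW1 hy) (sW4 hy),
      ← tsum_mul_tsum_of_summable_norm (sW5 hy) (sW6 hy), Z_zero]
    ring
  have p2 : (∑' p : ℤ × ℤ, ((-1 : ℂ) ^ (p.1 + p.2 + 1) * (2 * ((p.1 + p.2 + 1 : ℤ) : ℂ) + 1))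
        * x ^ ((p.1 + p.2 + 1) ^ 2 + (p.1 + p.2 + 1)) * x ^ ((p.1 - p.2) ^ 2 + (p.1 - p.2)))
      = (∑' n : ℤ, (-1 : ℂ) ^ n * (x ^ 2) ^ (n ^ 2))
          * (∑' n : ℤ, ((-1 : ℂ) ^ n * (2 * (n : ℂ) + 1)) * (x ^ 2) ^ (n ^ 2 + n)) := by
    have key : ∀ p : ℤ × ℤ, ((-1 : ℂ) ^ (p.1 + p.2 + 1) * (2 * ((p.1 + p.2 + 1 : ℤ) : ℂ) + 1))
          * x ^ ((p.1 + p.2 + 1) ^ 2 + (p.1 + p.2 + 1)) * x ^ ((p.1 - p.2) ^ 2 + (p.1 - p.2))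
        = ((-1 : ℂ) ^ (p.1 + 1) * (x ^ 2) ^ ((p.1 + 1) ^ 2))
            * (((-1 : ℂ) ^ p.2 * (2 * (p.2 : ℂ) + 1)) * (x ^ 2) ^ (p.2 ^ 2 + p.2))
          + (((-1 : ℂ) ^ (p.1 + 1) * (2 * (p.1 : ℂ) + 2)) * (x ^ 2) ^ ((p.1 + 1) ^ 2))
            * ((-1 : ℂ) ^ p.2 * (x ^ 2) ^ (p.2 ^ 2 + p.2)) := by
      intro p
      obtain ⟨a, b⟩ := p
      dsimp only
      have h2 : x ^ ((a + b + 1) ^ 2 + (a + b + 1)) * x ^ ((a - b) ^ 2 + (a - b))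
          = (x ^ 2) ^ ((a + 1) ^ 2) * (x ^ 2) ^ (b ^ 2 + b) := zpow_collect hx0 _ _ _ _ (by ring)
      have h1 : (-1 : ℂ) ^ (a + b + 1) = (-1) ^ (a + 1) * (-1) ^ b := by
        rw [show a + b + 1 = (a + 1) + b by ring]
        exact neg_one_zpow_add _ _
      push_cast
      linear_combination ((2 * (a : ℂ) + 2 * b + 3) * (-1 : ℂ) ^ (a + b + 1)) * h2
        + ((2 * (a : ℂ) + 2 * b + 3) * ((x ^ 2) ^ ((a + 1) ^ 2) * (x ^ 2) ^ (b ^ 2 + b))) * h1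
    rw [tsum_congr key]
    rw [Summable.tsum_add (((sW7 hy).mul_norm (sW1 hy)).of_norm) (((sW9 hy).mul_norm (sW5 hy)).of_norm)]
    rw [← tsum_mul_tsum_of_summable_norm (sW7 hy) (sW1 hy),
      ← tsum_mul_tsum_of_summable_norm (sW9 hy) (sW5 hy), Z_zero]
    have hshift : (∑' n : ℤ, (-1 : ℂ) ^ (n + 1) * (x ^ 2) ^ ((n + 1) ^ 2))
        = ∑' n : ℤ, (-1 : ℂ) ^ n * (x ^ 2) ^ (n ^ 2) :=
      (Equiv.addRight (1:ℤ)).tsum_eq (fun n : ℤ => (-1 : ℂ) ^ n * (x ^ 2) ^ (n ^ 2))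
    rw [hshift]
    ring
  rw [p1, p2]
  ring

end identities

/-! ### ℕ-indexed power series forms -/

def F1 (x : ℂ) : ℂ := ∑' n : ℕ, ((-1 : ℂ) ^ n * (2 * (n : ℂ) + 1)) * x ^ (n ^ 2 + n)
def F2 (x : ℂ) : ℂ := ∑' n : ℕ, (1 : ℂ) * x ^ (n ^ 2 + n)
def F3 (x : ℂ) : ℂ := ∑' n : ℕ, (1 : ℂ) * x ^ (n ^ 2)
def F4 (x : ℂ) : ℂ := ∑' n : ℕ, (1 : ℂ) * x ^ ((n + 1) ^ 2)
def F5 (x : ℂ) : ℂ := ∑' n : ℕ, ((-1 : ℂ) ^ n) * x ^ (n ^ 2)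
def F6 (x : ℂ) : ℂ := ∑' n : ℕ, ((-1 : ℂ) ^ (n + 1)) * x ^ ((n + 1) ^ 2)

section bridges

variable {x : ℂ} (hx : ‖x‖ < 1)

/-- Split a `ℤ`-indexed sum into `n ≥ 0` and `n = -1-m, m ≥ 0` parts. -/
lemma int_split (f : ℤ → ℂ) (hf : Summable f) :
    ∑' n : ℤ, f n = (∑' n : ℕ, f n) + ∑' n : ℕ, f (-1 - (n : ℤ)) := by
  have h2 : Summable (f ∘ e₁) := e₁.summable_iff.mpr hf
  rw [← e₁.tsum_eq f,
    tsum_sumType (f := fun c : ℕ ⊕ ℕ => f (e₁ c)) (h2.comp_injective Sum.inl_injective)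
      (h2.comp_injective Sum.inr_injective)]
  rfl

include hx

lemma bridgeB : (∑' n : ℤ, x ^ (n ^ 2 + n)) = 2 * F2 x := by
  rw [int_split _ ((sW2 hx).of_norm)]
  have t1 : ∀ n : ℕ, x ^ (((n : ℤ)) ^ 2 + (n : ℤ)) = (1 : ℂ) * x ^ (n ^ 2 + n) := by
    intro n
    rw [show ((n : ℤ)) ^ 2 + (n : ℤ) = ((n ^ 2 + n : ℕ) : ℤ) by push_cast; ring,
      zpow_natCast, one_mul]
  have t2 : ∀ n : ℕ, x ^ ((-1 - (n : ℤ)) ^ 2 + (-1 - (n : ℤ))) = (1 : ℂ) * x ^ (n ^ 2 + n) := by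
    intro n
    rw [show (-1 - (n : ℤ)) ^ 2 + (-1 - (n : ℤ)) = ((n ^ 2 + n : ℕ) : ℤ) by push_cast; ring,
      zpow_natCast, one_mul]
  rw [tsum_congr t1, tsum_congr t2]
  rw [show (∑' n : ℕ, (1:ℂ) * x ^ (n ^ 2 + n)) = F2 x from rfl]
  ring

lemma bridgeA : (∑' n : ℤ, ((-1 : ℂ) ^ n * (2 * (n : ℂ) + 1)) * x ^ (n ^ 2 + n)) = 2 * F1 x := by
  rw [int_split _ ((sW1 hx).of_norm)]
  have t1 : ∀ n : ℕ, ((-1 : ℂ) ^ ((n : ℤ)) * (2 * (((n : ℤ)) : ℂ) + 1)) * x ^ (((n : ℤ)) ^ 2 + (n : ℤ))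
      = ((-1 : ℂ) ^ n * (2 * (n : ℂ) + 1)) * x ^ (n ^ 2 + n) := by
    intro n
    rw [show ((n : ℤ)) ^ 2 + (n : ℤ) = ((n ^ 2 + n : ℕ) : ℤ) by push_cast; ring,
      zpow_natCast, zpow_natCast]
    norm_num
  have t2 : ∀ n : ℕ, ((-1 : ℂ) ^ (-1 - (n : ℤ)) * (2 * ((-1 - (n : ℤ) : ℤ) : ℂ) + 1))
        * x ^ ((-1 - (n : ℤ)) ^ 2 + (-1 - (n : ℤ)))
      = ((-1 : ℂ) ^ n * (2 * (n : ℂ) + 1)) * x ^ (n ^ 2 + n) := by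
    intro n
    rw [show (-1 - (n : ℤ)) ^ 2 + (-1 - (n : ℤ)) = ((n ^ 2 + n : ℕ) : ℤ) by push_cast; ring,
      zpow_natCast, neg_one_zpow_neg_one_sub, zpow_natCast]
    push_cast
    ring
  rw [tsum_congr t1, tsum_congr t2]
  rw [show (∑' n : ℕ, ((-1 : ℂ) ^ n * (2 * (n : ℂ) + 1)) * x ^ (n ^ 2 + n)) = F1 x from rfl]
  ring

lemma bridgeC : (∑' n : ℤ, x ^ (n ^ 2)) = F3 x + F4 x := by
  rw [int_split _ ((sW3 hx).of_norm)]
  have t1 : ∀ n : ℕ, x ^ (((n : ℤ)) ^ 2) = (1 : ℂ) * x ^ (n ^ 2) := by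
    intro n
    rw [show ((n : ℤ)) ^ 2 = ((n ^ 2 : ℕ) : ℤ) by push_cast; ring, zpow_natCast, one_mul]
  have t2 : ∀ n : ℕ, x ^ ((-1 - (n : ℤ)) ^ 2) = (1 : ℂ) * x ^ ((n + 1) ^ 2) := by
    intro n
    rw [show (-1 - (n : ℤ)) ^ 2 = (((n + 1) ^ 2 : ℕ) : ℤ) by push_cast; ring,
      zpow_natCast, one_mul]
  rw [tsum_congr t1, tsum_congr t2]
  rfl

lemma bridgeD : (∑' n : ℤ, (-1 : ℂ) ^ n * x ^ (n ^ 2)) = F5 x + F6 x := by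
  rw [int_split _ ((sW4 hx).of_norm)]
  have t1 : ∀ n : ℕ, (-1 : ℂ) ^ ((n : ℤ)) * x ^ (((n : ℤ)) ^ 2) = (-1 : ℂ) ^ n * x ^ (n ^ 2) := by
    intro n
    rw [show ((n : ℤ)) ^ 2 = ((n ^ 2 : ℕ) : ℤ) by push_cast; ring, zpow_natCast, zpow_natCast]
  have t2 : ∀ n : ℕ, (-1 : ℂ) ^ (-1 - (n : ℤ)) * x ^ ((-1 - (n : ℤ)) ^ 2)
      = (-1 : ℂ) ^ (n + 1) * x ^ ((n + 1) ^ 2) := by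
    intro n
    rw [show (-1 - (n : ℤ)) ^ 2 = (((n + 1) ^ 2 : ℕ) : ℤ) by push_cast; ring,
      zpow_natCast, neg_one_zpow_neg_one_sub, zpow_natCast, pow_succ]
    ring
  rw [tsum_congr t1, tsum_congr t2]
  rfl

end bridges

/-! ### Analyticity -/

lemma analyticOnNhd_master (c : ℕ → ℂ) (e : ℕ → ℕ) (hc : ∀ n, ‖c n‖ ≤ 2 * (n : ℝ) + 3)
    (he : ∀ n, n ≤ e n) :
    AnalyticOnNhd ℂ (fun x => ∑' n : ℕ, c n * x ^ e n) (Metric.ball 0 1) := by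
  intro z hz
  rw [Metric.mem_ball, dist_zero_right] at hz
  set r : ℝ := (‖z‖ + 1) / 2 with hr
  have hz0 := norm_nonneg z
  have hr0 : 0 ≤ r := by positivity
  have hr1 : r < 1 := by rw [hr]; linarith
  have hzr : ‖z‖ < r := by rw [hr]; linarith
  have hu : Summable fun n : ℕ => (2 * (n : ℝ) + 3) * r ^ n := by
    have hpoly : Summable fun n : ℕ => (n : ℝ) ^ 1 * r ^ n :=
      summable_pow_mul_geometric_of_norm_lt_one 1
        (by rwa [Real.norm_eq_abs, _root_.abs_of_nonneg hr0])
    have hgeom : Summable fun n : ℕ => r ^ n := summable_geometric_of_lt_one hr0 hr1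
    refine ((hpoly.mul_left 2).add (hgeom.mul_left 3)).congr fun n => ?_
    simp only [pow_one]
    ring
  have hb : ∀ (n : ℕ) (w : ℂ), w ∈ Metric.ball (0:ℂ) r → ‖c n * w ^ e n‖ ≤ (2 * (n : ℝ) + 3) * r ^ n := by
    intro n w hw
    rw [Metric.mem_ball, dist_zero_right] at hw
    rw [norm_mul, norm_pow]
    have h1 : ‖w‖ ^ e n ≤ r ^ e n := pow_le_pow_left₀ (norm_nonneg w) hw.le _
    have h2 : r ^ e n ≤ r ^ n := pow_le_pow_of_le_one hr0 hr1.le (he n)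
    exact mul_le_mul (hc n) (h1.trans h2) (by positivity) (by positivity)
  have tuo := tendstoUniformlyOn_tsum hu hb
  have hdiff : DifferentiableOn ℂ (fun x => ∑' n : ℕ, c n * x ^ e n) (Metric.ball 0 r) := by
    apply tuo.tendstoLocallyUniformlyOn.differentiableOn ?_ Metric.isOpen_ball
    filter_upwards with t
    exact (Differentiable.fun_sum fun i _ => (differentiable_pow (e i)).const_mul (c i)).differentiableOn
  exact hdiff.analyticAt (Metric.isOpen_ball.mem_nhds (by rw [Metric.mem_ball, dist_zero_right]; exact hzr))

lemma norm_coeff1 : ∀ n : ℕ, ‖(-1 : ℂ) ^ n * (2 * (n : ℂ) + 1)‖ ≤ 2 * (n : ℝ) + 3 := by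
  intro n
  rw [norm_mul, norm_pow, norm_neg, norm_one, one_pow, one_mul]
  rw [show (2 * (n : ℂ) + 1) = ((2 * (n : ℝ) + 1 : ℝ) : ℂ) by push_cast; ring,
    Complex.norm_real, Real.norm_eq_abs, _root_.abs_of_nonneg (by positivity)]
  linarith

lemma norm_coeff_one : ∀ n : ℕ, ‖(1 : ℂ)‖ ≤ 2 * (n : ℝ) + 3 := by
  intro n
  rw [norm_one]
  have : (0:ℝ) ≤ (n : ℝ) := Nat.cast_nonneg n
  linarith

lemma norm_coeff_sign : ∀ n : ℕ, ‖(-1 : ℂ) ^ n‖ ≤ 2 * (n : ℝ) + 3 := by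
  intro n
  rw [norm_pow, norm_neg, norm_one, one_pow]
  have : (0:ℝ) ≤ (n : ℝ) := Nat.cast_nonneg n
  linarith

lemma norm_coeff_sign1 : ∀ n : ℕ, ‖(-1 : ℂ) ^ (n + 1)‖ ≤ 2 * (n : ℝ) + 3 := by
  intro n
  rw [norm_pow, norm_neg, norm_one, one_pow]
  have : (0:ℝ) ≤ (n : ℝ) := Nat.cast_nonneg n
  linarith

lemma hee : ∀ n : ℕ, n ≤ n ^ 2 + n := fun n => Nat.le_add_left n (n ^ 2)
lemma hes : ∀ n : ℕ, n ≤ n ^ 2 := fun n => Nat.le_self_pow (by norm_num) n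
lemma hes1 : ∀ n : ℕ, n ≤ (n + 1) ^ 2 :=
  fun n => (Nat.le_succ n).trans (Nat.le_self_pow (by norm_num) (n + 1))

lemma aF1 : AnalyticOnNhd ℂ F1 (Metric.ball 0 1) :=
  analyticOnNhd_master _ _ norm_coeff1 hee
lemma aF2 : AnalyticOnNhd ℂ F2 (Metric.ball 0 1) :=
  analyticOnNhd_master _ _ norm_coeff_one hee
lemma aF3 : AnalyticOnNhd ℂ F3 (Metric.ball 0 1) :=
  analyticOnNhd_master _ _ norm_coeff_one hes
lemma aF4 : AnalyticOnNhd ℂ F4 (Metric.ball 0 1) :=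
  analyticOnNhd_master _ _ norm_coeff_one hes1
lemma aF5 : AnalyticOnNhd ℂ F5 (Metric.ball 0 1) :=
  analyticOnNhd_master _ _ norm_coeff_sign hes
lemma aF6 : AnalyticOnNhd ℂ F6 (Metric.ball 0 1) :=
  analyticOnNhd_master _ _ norm_coeff_sign1 hes1

/-! ### The deficiency function `E` -/

def E (x : ℂ) : ℂ := 2 * F1 x - (2 * F2 x) * ((F3 x + F4 x) * (F5 x + F6 x))

lemma aE : AnalyticOnNhd ℂ E (Metric.ball 0 1) :=
  (analyticOnNhd_const.mul aF1).sub
    ((analyticOnNhd_const.mul aF2).mul ((aF3.add aF4).mul (aF5.add aF6)))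

lemma funcEq {x : ℂ} (hx : ‖x‖ < 1) (hx0 : x ≠ 0) :
    E x * (2 * F2 x) = 2 * (F5 (x ^ 2) + F6 (x ^ 2)) * E (x ^ 2) := by
  have hy : ‖x ^ 2‖ < 1 := norm_sq_lt hx
  have h1 := idAB hx hx0
  have h2 := idB hx hx0
  have h3 := idCD hx hx0
  rw [bridgeA hx, bridgeB hx, bridgeA hy, bridgeD hy] at h1
  rw [bridgeB hx, bridgeB hy, bridgeC hy] at h2
  rw [bridgeC hx, bridgeD hx, bridgeD hy] at h3
  unfold E
  linear_combination h1 - ((F3 x + F4 x) * (F5 x + F6 x)) * h2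
    - (2 * (2 * F2 (x ^ 2)) * (F3 (x ^ 2) + F4 (x ^ 2))) * h3

/-! ### Values at zero -/

lemma F1_zero : F1 0 = 1 := by
  unfold F1
  rw [tsum_eq_single 0 (fun n hn => by
    rw [zero_pow (Nat.add_pos_right (n ^ 2) (Nat.pos_of_ne_zero hn)).ne', mul_zero])]
  norm_num

lemma F2_zero : F2 0 = 1 := by
  unfold F2
  rw [tsum_eq_single 0 (fun n hn => by
    rw [zero_pow (Nat.add_pos_right (n ^ 2) (Nat.pos_of_ne_zero hn)).ne', mul_zero])]
  norm_num

lemma F3_zero : F3 0 = 1 := by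
  unfold F3
  rw [tsum_eq_single 0 (fun n hn => by
    rw [zero_pow (pow_ne_zero 2 hn), mul_zero])]
  norm_num

lemma F4_zero : F4 0 = 0 := by
  unfold F4
  rw [show (fun n : ℕ => (1:ℂ) * (0:ℂ) ^ ((n + 1) ^ 2)) = fun _ => (0:ℂ) from funext fun n => by
    rw [zero_pow (pow_ne_zero 2 (Nat.succ_ne_zero n)), mul_zero]]
  exact tsum_zero

lemma F5_zero : F5 0 = 1 := by
  unfold F5
  rw [tsum_eq_single 0 (fun n hn => by
    rw [zero_pow (pow_ne_zero 2 hn), mul_zero])]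
  norm_num

lemma F6_zero : F6 0 = 0 := by
  unfold F6
  rw [show (fun n : ℕ => ((-1:ℂ) ^ (n + 1)) * (0:ℂ) ^ ((n + 1) ^ 2)) = fun _ => (0:ℂ) from
    funext fun n => by rw [zero_pow (pow_ne_zero 2 (Nat.succ_ne_zero n)), mul_zero]]
  exact tsum_zero

lemma E_zero_val : E 0 = 0 := by
  unfold E
  rw [F1_zero, F2_zero, F3_zero, F4_zero, F5_zero, F6_zero]
  ring

/-! ### `E` vanishes identically on the unit ball -/

lemma E_vanishes {x : ℂ} (hx : ‖x‖ < 1) : E x = 0 := by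
  have h0 : (0:ℂ) ∈ Metric.ball (0:ℂ) 1 := Metric.mem_ball_self one_pos
  have hA : AnalyticAt ℂ E 0 := aE 0 h0
  have hev : ∀ᶠ z in nhds (0:ℂ), E z = 0 := by
    rcases eq_or_ne (analyticOrderAt E 0) ⊤ with h | h
    · exact analyticOrderAt_eq_top.mp h
    · exfalso
      obtain ⟨k, hk⟩ := WithTop.ne_top_iff_exists.mp h
      obtain ⟨g, hg, hg0, hfg⟩ := (hA.analyticOrderAt_eq_natCast (n := k)).mp hk.symm
      have hfg' : ∀ᶠ z in nhds (0:ℂ), E z = z ^ k * g z := by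
        filter_upwards [hfg] with z hz
        simpa using hz
      have hk0 : k ≠ 0 := by
        intro h0k
        subst h0k
        have h1 := hfg'.self_of_nhds
        rw [E_zero_val, pow_zero, one_mul] at h1
        exact hg0 h1.symm
      set u : ℂ → ℂ :=
        fun z => g z * (2 * F2 z) - 2 * (F5 (z ^ 2) + F6 (z ^ 2)) * (z ^ k * g (z ^ 2)) with hu
      have hsq : Filter.Tendsto (fun z : ℂ => z ^ 2) (nhds 0) (nhds 0) := by
        simpa using (continuous_pow 2).tendsto (0:ℂ)
      have h2 : ∀ᶠ z in nhds (0:ℂ), E (z ^ 2) = (z ^ 2) ^ k * g (z ^ 2) := hsq.eventually hfg'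
      have h3 : ∀ᶠ z in nhds (0:ℂ), ‖z‖ < 1 := by
        filter_upwards [Metric.isOpen_ball.eventually_mem h0] with z hz
        rwa [Metric.mem_ball, dist_zero_right] at hz
      have hu_ev : ∀ᶠ z in nhdsWithin (0:ℂ) {(0:ℂ)}ᶜ, u z = 0 := by
        filter_upwards [hfg'.filter_mono nhdsWithin_le_nhds, h2.filter_mono nhdsWithin_le_nhds,
          h3.filter_mono nhdsWithin_le_nhds, self_mem_nhdsWithin] with z e1 e2 e3 hz0
        have hz0' : z ≠ 0 := hz0
        have hzk : z ^ k ≠ 0 := pow_ne_zero _ hz0'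
        apply mul_left_cancel₀ hzk
        rw [mul_zero]
        have hpow : (z ^ 2) ^ k = z ^ k * z ^ k := by
          rw [← pow_mul, two_mul, pow_add]
        calc z ^ k * u z = E z * (2 * F2 z) - 2 * (F5 (z ^ 2) + F6 (z ^ 2)) * E (z ^ 2) := by
              rw [e1, e2, hpow, hu]; ring
          _ = 0 := by rw [funcEq e3 hz0']; ring
      have hu_cont : ContinuousAt u 0 := by
        have c1 : ContinuousAt g 0 := hg.continuousAt
        have c2 : ContinuousAt F2 0 := (aF2 0 h0).continuousAt
        have hsq0 : ContinuousAt (fun z : ℂ => z ^ 2) 0 := (continuous_pow 2).continuousAt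
        have h02 : ((0:ℂ) ^ 2) = 0 := by norm_num
        have c5at : ContinuousAt F5 ((0:ℂ) ^ 2) := by rw [h02]; exact (aF5 0 h0).continuousAt
        have c6at : ContinuousAt F6 ((0:ℂ) ^ 2) := by rw [h02]; exact (aF6 0 h0).continuousAt
        have cgat : ContinuousAt g ((0:ℂ) ^ 2) := by rw [h02]; exact hg.continuousAt
        have c5 : ContinuousAt (fun z : ℂ => F5 (z ^ 2)) 0 :=
          ContinuousAt.comp (x := (0:ℂ)) (g := F5) (f := fun z : ℂ => z ^ 2) c5at hsq0
        have c6 : ContinuousAt (fun z : ℂ => F6 (z ^ 2)) 0 :=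
          ContinuousAt.comp (x := (0:ℂ)) (g := F6) (f := fun z : ℂ => z ^ 2) c6at hsq0
        have cg2 : ContinuousAt (fun z : ℂ => g (z ^ 2)) 0 :=
          ContinuousAt.comp (x := (0:ℂ)) (g := g) (f := fun z : ℂ => z ^ 2) cgat hsq0
        exact (c1.mul (continuousAt_const.mul c2)).sub
          ((continuousAt_const.mul (c5.add c6)).mul
            (((continuous_pow k).continuousAt).mul cg2))
      have hlim1 : Filter.Tendsto u (nhdsWithin (0:ℂ) {(0:ℂ)}ᶜ) (nhds (u 0)) :=
        (hu_cont.tendsto).mono_left nhdsWithin_le_nhds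
      have hlim2 : Filter.Tendsto u (nhdsWithin (0:ℂ) {(0:ℂ)}ᶜ) (nhds 0) :=
        Filter.Tendsto.congr' (hu_ev.mono fun z hz => hz.symm) tendsto_const_nhds
      have hu0 : u 0 = 0 := tendsto_nhds_unique hlim1 hlim2
      rw [hu] at hu0
      simp only [F2_zero] at hu0
      rw [show ((0:ℂ) ^ 2) = 0 by norm_num, F5_zero, F6_zero, zero_pow hk0] at hu0
      have : g 0 = 0 := by linear_combination (1/2 : ℂ) * hu0
      exact hg0 this
  have heq : Set.EqOn E 0 (Metric.ball 0 1) :=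
    aE.eqOn_zero_of_preconnected_of_eventuallyEq_zero
      (convex_ball (0:ℂ) 1).isPreconnected h0 hev
  exact heq (by rwa [Metric.mem_ball, dist_zero_right])

end JDF

open JDF

/-- The Jacobi derivative formula
`θ₁'(0,q) = 2 Σ_{n≥0} (-1)^n (2n+1) q^{(n+1/2)²} = θ₂(0,q)θ₃(0,q)θ₄(0,q)`. -/
theorem jacobi_derivative_formula (q : ℂ) (h0 : 0 < ‖q‖)
    (h1 : ‖q‖ < 1) :
    2 * ∑' n : ℕ, (-1 : ℂ) ^ n * (2 * (n : ℂ) + 1) * q ^ (((n : ℂ) + 1 / 2) ^ 2) =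
      thetaTwo q * thetaThree q * thetaFour q := by
  have hq : ‖q‖ < 1 := by exact h1
  have hq0 : q ≠ 0 := by
    intro h
    rw [h] at h0
    simp at h0
  have key : ∀ n : ℕ, (-1 : ℂ) ^ n * (2 * (n : ℂ) + 1) * q ^ (((n : ℂ) + 1 / 2) ^ 2)
      = q ^ ((1 : ℂ) / 4) * (((-1 : ℂ) ^ n * (2 * (n : ℂ) + 1)) * q ^ (n ^ 2 + n)) := by
    intro n
    have he : ((n : ℂ) + 1 / 2) ^ 2 = ((n ^ 2 + n : ℕ) : ℂ) + 1 / 4 := by push_cast; ring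
    rw [he, Complex.cpow_add _ _ hq0, Complex.cpow_natCast]
    ring
  rw [tsum_congr key, tsum_mul_left]
  have hT2 : thetaTwo q = q ^ ((1 : ℂ) / 4) * (2 * F2 q) := by
    unfold thetaTwo
    have key2 : ∀ n : ℤ, q ^ (((n : ℂ) + 1 / 2) ^ 2) = q ^ ((1 : ℂ) / 4) * q ^ (n ^ 2 + n) := by
      intro n
      have he : ((n : ℂ) + 1 / 2) ^ 2 = ((n ^ 2 + n : ℤ) : ℂ) + 1 / 4 := by push_cast; ring
      rw [he, Complex.cpow_add _ _ hq0, Complex.cpow_intCast]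
      ring
    rw [tsum_congr key2, tsum_mul_left, bridgeB hq]
  have hT3 : thetaThree q = F3 q + F4 q := bridgeC hq
  have hT4 : thetaFour q = F5 q + F6 q := bridgeD hq
  rw [hT2, hT3, hT4]
  have hF1 : (∑' n : ℕ, ((-1 : ℂ) ^ n * (2 * (n : ℂ) + 1)) * q ^ (n ^ 2 + n)) = F1 q := rfl
  rw [hF1]
  have hEz : E q = 0 := E_vanishes hq
  unfold E at hEz
  linear_combination (q ^ ((1 : ℂ) / 4)) * hEz
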